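/- Let R and S be commutative rings with unity, f : R → S a ring homomorphism, and J a proper ideal of S with J ⊆ Jac(S). Assume R ⋈^f J satisfies condition ★. If R is a total ring of quotients, then so is R ⋈^f J. -/

import Mathlib

open Pointwise

/-- The amalgamation `R ⋈^f J` of `R` with `S` along the ideal `J` with respect to
`f : R →+* S`, as a subring of `R × S`. -/
def amalgamation {R S : Type*} [CommRing R] [CommRing S] (f : R →+* S) (J : Ideal S) :
    Subring (R × S) where
  carrier := {p | ∃ j ∈ J, p.2 = f p.1 + j}
  zero_mem' := ⟨0, J.zero_mem, by simp⟩
  one_mem' := ⟨0, J.zero_mem, by simp⟩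
  add_mem' := by
    rintro ⟨a, a'⟩ ⟨b, b'⟩ ⟨j, hj, h1⟩ ⟨k, hk, h2⟩
    exact ⟨j + k, J.add_mem hj hk, by simp_all; ring⟩
  neg_mem' := by
    rintro ⟨a, a'⟩ ⟨j, hj, h1⟩
    exact ⟨-j, J.neg_mem hj, by simp_all; ring⟩
  mul_mem' := by
    rintro ⟨a, a'⟩ ⟨b, b'⟩ ⟨j, hj, h1⟩ ⟨k, hk, h2⟩
    refine ⟨f a * k + j * f b + j * k, ?_, by simp_all; ring⟩
    exact J.add_mem (J.add_mem (J.mul_mem_left _ hk) (J.mul_mem_right _ hj))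
      (J.mul_mem_right _ hj)

/-- The set of zero-divisors of a commutative ring `A`. -/
def zdivSet (A : Type*) [CommRing A] : Set A := {a | ∃ b, b ≠ 0 ∧ a * b = 0}

/-- Condition `★`: the zero-divisors of `R ⋈^f J` are exactly the elements whose first
coordinate is a zero-divisor of `R` together with the elements `(r, f r + j)` such that
`f r + j` is killed by some nonzero element of `J`. -/
def conditionStar {R S : Type*} [CommRing R] [CommRing S] (f : R →+* S) (J : Ideal S) : Prop :=
  ∀ x : amalgamation f J, x ∈ zdivSet (amalgamation f J) ↔
    ((x : R × S).1 ∈ zdivSet R ∨ ∃ j' ∈ J, j' ≠ 0 ∧ j' * (x : R × S).2 = 0)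

/-- A commutative ring is a total ring of quotients if every regular element is a unit. -/
def IsTotalRingOfQuotients (A : Type*) [CommRing A] : Prop :=
  ∀ a : A, a ∈ nonZeroDivisors A → IsUnit a

theorem stmt15 {R S : Type*} [CommRing R] [CommRing S] (f : R →+* S) (J : Ideal S)
    (hJ : J ≠ ⊤) (hJjac : J ≤ Ideal.jacobson (⊥ : Ideal S))
    (hstar : conditionStar f J)
    (hR : IsTotalRingOfQuotients R) :
    IsTotalRingOfQuotients (amalgamation f J) := by
  intro x hx
  -- x is not a zero-divisor
  have hxz : x ∉ zdivSet (amalgamation f J) := by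
    rintro ⟨b, hb, hab⟩
    exact hb ((mem_nonZeroDivisors_iff_right.mp hx) b (by rw [mul_comm]; exact hab))
  have hnot := (hstar x).not.mp hxz
  push_neg at hnot
  obtain ⟨hr, -⟩ := hnot
  -- the first coordinate is regular in R, hence a unit
  have hr1 : (x : R × S).1 ∈ nonZeroDivisors R := by
    rw [mem_nonZeroDivisors_iff_right]
    intro z hz
    by_contra hz0
    exact hr ⟨z, hz0, by rw [mul_comm]; exact hz⟩
  obtain ⟨u, hu⟩ := hR _ hr1
  obtain ⟨j, hjJ, hj⟩ := x.property
  -- f r + j is a unit in S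
  have hs : IsUnit ((x : R × S).2) := by
    rw [hj]
    have h1 : ∀ y, IsUnit (j * y + 1) := Ideal.mem_jacobson_bot.mp (hJjac hjJ)
    have h2 := (h1 (f ↑u⁻¹)).mul ((IsUnit.of_mul_eq_one (a := f ↑u) (f ↑u⁻¹)
      (by rw [← map_mul, Units.mul_inv, map_one])))
    have key : (j * f ↑u⁻¹ + 1) * f ↑u = f (x : R × S).1 + j := by
      rw [← hu]
      have : f ↑u⁻¹ * f ↑u = 1 := by rw [← map_mul, Units.inv_mul, map_one]
      ring_nf
      rw [mul_assoc, this]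
      ring
    rwa [key] at h2
  obtain ⟨w, hw⟩ := hs
  -- construct the inverse in the amalgamation
  refine IsUnit.of_mul_eq_one (a := x) ⟨(↑u⁻¹, ↑w⁻¹), ?_⟩ ?_
  · refine ⟨-(↑w⁻¹ * f ↑u⁻¹ * j), J.neg_mem (J.mul_mem_left _ hjJ), ?_⟩
    have hwv : (↑w⁻¹ : S) * (f (x : R × S).1 + j) = 1 := by
      rw [← hj, ← hw, Units.inv_mul]
    have hfu : f ↑u⁻¹ * f (x : R × S).1 = 1 := by
      rw [← hu, ← map_mul, Units.inv_mul, map_one]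
    have : (↑w⁻¹ : S) - f ↑u⁻¹ = -(↑w⁻¹ * f ↑u⁻¹ * j) := by
      have e1 : (↑w⁻¹ : S) * (f ↑u⁻¹ * (f (x : R × S).1 + j)) = f ↑u⁻¹ := by
        rw [mul_comm (f ↑u⁻¹), ← mul_assoc, hwv, one_mul]
      calc (↑w⁻¹ : S) - f ↑u⁻¹ = ↑w⁻¹ * 1 - ↑w⁻¹ * (f ↑u⁻¹ * (f (x : R × S).1 + j)) := by
              rw [e1, mul_one]
        _ = ↑w⁻¹ * (1 - f ↑u⁻¹ * (f (x : R × S).1 + j)) := by ring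
        _ = ↑w⁻¹ * (1 - (1 + f ↑u⁻¹ * j)) := by rw [mul_add, hfu]
        _ = -(↑w⁻¹ * f ↑u⁻¹ * j) := by ring
    linear_combination this
  · apply Subtype.ext
    apply Prod.ext
    · show (x : R × S).1 * ↑u⁻¹ = 1
      rw [← hu, Units.mul_inv]
    · show (x : R × S).2 * ↑w⁻¹ = 1
      rw [← hw, Units.mul_inv]
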